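/- Fix a spin weight s∈ℤ, an integer ℓ≥|s|, and σ∈ℂ with σ≠0. Set L=(ℓ−s)(ℓ+s+1) and S=(s+1)(2s+1), and define a sequence (cₙ) of complex numbers by c₀=1, c₁=L/(2σ), and for all n≥0: 2σ(n+2)c_{n+2} = [L − (n+1)(n+2s+2)]c_{n+1} + [n(n+3s+2)+S]cₙ. Then for every N∈ℕ, the truncated Thomé series y_N(ρ) = Σ_{n=0}^{N} cₙ ρ^{−n} satisfies y_N''(ρ) + P(ρ,σ)y_N'(ρ) + Q(ρ)y_N(ρ) = O(ρ^{−(N+2)}) as ρ→∞ along (1,∞). -/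

import Mathlib

set_option maxHeartbeats 1000000


noncomputable section

/-- `P(ρ,σ) = −2σ − (3s+1)/ρ + (1+s−2σ)/(ρ−1)`. -/
def Pcoef (s : ℤ) (σ ρ : ℂ) : ℂ := -2*σ - (3*(s:ℂ)+1)/ρ + (1+(s:ℂ)-2*σ)/(ρ-1)

/-- `Q(ρ) = (s+1)(2s+1)/ρ² − ((s+1)²+ℓ(ℓ+1))/(ρ(ρ−1))`. -/
def Qcoef (s ℓ : ℤ) (ρ : ℂ) : ℂ :=
  ((s:ℂ)+1)*(2*(s:ℂ)+1)/ρ^2 - (((s:ℂ)+1)^2 + (ℓ:ℂ)*((ℓ:ℂ)+1))/(ρ*(ρ-1))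

/-- The truncated Thomé series `y_N(ρ) = Σ_{n=0}^{N} cₙ ρ^{−n}`. -/
def thomePartial (c : ℕ → ℂ) (N : ℕ) (ρ : ℝ) : ℂ :=
  ∑ n ∈ Finset.range (N+1), c n * (ρ:ℂ)^(-(n:ℤ))

def Ys (c : ℕ → ℂ) (N : ℕ) (w : ℂ) : ℂ := ∑ n ∈ Finset.range (N+1), c n * w ^ (-(n:ℤ))
def Ys1 (c : ℕ → ℂ) (N : ℕ) (w : ℂ) : ℂ := ∑ n ∈ Finset.range (N+1), c n * (-(n:ℂ)) * w ^ (-(n:ℤ)-1)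
def Ys2 (c : ℕ → ℂ) (N : ℕ) (w : ℂ) : ℂ := ∑ n ∈ Finset.range (N+1), c n * ((n:ℂ)*((n:ℂ)+1)) * w ^ (-(n:ℤ)-2)

lemma key_identity (s ℓ : ℤ) (σ : ℂ) (hσ : σ ≠ 0) (c : ℕ → ℂ)
    (hc0 : c 0 = 1)
    (hc1 : c 1 = ((ℓ:ℂ)-(s:ℂ))*((ℓ:ℂ)+(s:ℂ)+1) / (2*σ))
    (hrec : ∀ n : ℕ,
      2*σ*((n:ℂ)+2) * c (n+2) =
        (((ℓ:ℂ)-(s:ℂ))*((ℓ:ℂ)+(s:ℂ)+1) - ((n:ℂ)+1)*((n:ℂ)+2*(s:ℂ)+2)) * c (n+1) +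
          ((n:ℂ)*((n:ℂ)+3*(s:ℂ)+2) + ((s:ℂ)+1)*(2*(s:ℂ)+1)) * c n) :
    ∀ (N : ℕ) (w : ℂ), w ≠ 0 →
      w^3*(w-1)*Ys2 c N w
        + (-2*σ*w*(w-1) - (3*(s:ℂ)+1)*(w-1) + (1+(s:ℂ)-2*σ)*w) * (w^2 * Ys1 c N w)
        + (((s:ℂ)+1)*(2*(s:ℂ)+1)*(w-1) - (((s:ℂ)+1)^2 + (ℓ:ℂ)*((ℓ:ℂ)+1))*w) * (w * Ys c N w)
      = -2*σ*((N:ℂ)+1)*c (N+1) * w^(-(N:ℤ)) * w^2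
          - ((N:ℂ)*((N:ℂ)+3*(s:ℂ)+2) + ((s:ℂ)+1)*(2*(s:ℂ)+1)) * c N * w^(-(N:ℤ)) * w := by
  intro N
  induction N with
  | zero =>
    intro w hw
    simp only [Ys, Ys1, Ys2, zero_add, Finset.sum_range_one, Nat.cast_zero, neg_zero,
      zpow_zero, hc0, hc1]
    field_simp
    ring
  | succ N ih =>
    intro w hw
    have F0 : w ^ (-(N:ℤ)) = w ^ (-(N:ℤ)-3) * w ^ 3 := by
      conv_lhs => rw [show (-(N:ℤ)) = (-(N:ℤ)-3)+3 by ring]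
      rw [zpow_add₀ hw]; norm_cast
    have F1 : w ^ (-(N:ℤ)-1) = w ^ (-(N:ℤ)-3) * w ^ 2 := by
      conv_lhs => rw [show (-(N:ℤ)-1) = (-(N:ℤ)-3)+2 by ring]
      rw [zpow_add₀ hw]; norm_cast
    have F2 : w ^ (-(N:ℤ)-2) = w ^ (-(N:ℤ)-3) * w := by
      conv_lhs => rw [show (-(N:ℤ)-2) = (-(N:ℤ)-3)+1 by ring]
      rw [zpow_add₀ hw, zpow_one]
    have hYs : Ys c (N+1) w = Ys c N w + c (N+1) * w ^ (-(N:ℤ)-1) := by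
      rw [Ys, Finset.sum_range_succ]
      congr 2
      push_cast; ring
    have hYs1 : Ys1 c (N+1) w = Ys1 c N w + c (N+1) * (-((N:ℂ)+1)) * w ^ (-(N:ℤ)-2) := by
      rw [Ys1, Finset.sum_range_succ]
      congr 1
      rw [show (-((N+1:ℕ):ℤ)-1) = (-(N:ℤ)-2) by push_cast; ring]
      push_cast; ring
    have hYs2 : Ys2 c (N+1) w = Ys2 c N w + c (N+1) * (((N:ℂ)+1)*((N:ℂ)+2)) * w ^ (-(N:ℤ)-3) := by
      rw [Ys2, Finset.sum_range_succ]
      congr 1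
      rw [show (-((N+1:ℕ):ℤ)-2) = (-(N:ℤ)-3) by push_cast; ring]
      push_cast; ring
    have hih := ih w hw
    rw [hYs, hYs1, hYs2]
    rw [show (N+1+1) = N+2 by rfl]
    rw [show (-((N+1:ℕ):ℤ)) = (-(N:ℤ)-1) by push_cast; ring]
    simp only [Nat.cast_add, Nat.cast_one]
    rw [F1, F2]
    rw [F0] at hih
    generalize hA : w ^ (-(N:ℤ)-3) = B at hih ⊢
    linear_combination hih + B*w^4*(hrec N)

lemma hasDerivAt_thomePartial (c : ℕ → ℂ) (N : ℕ) {ρ : ℝ} (hρ : ρ ≠ 0) :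
    HasDerivAt (thomePartial c N) (Ys1 c N (ρ:ℂ)) ρ := by
  have hz : ((ρ:ℂ)) ≠ 0 := by exact_mod_cast hρ
  have h : ∀ n ∈ Finset.range (N+1), HasDerivAt (fun x:ℝ => c n * ((x:ℂ)) ^ (-(n:ℤ)))
      (c n * (-(n:ℂ)) * (ρ:ℂ) ^ (-(n:ℤ)-1)) ρ := by
    intro n _
    have h1 := ((hasDerivAt_zpow (-(n:ℤ)) ((ρ:ℂ)) (Or.inl hz)).comp_ofReal).const_mul (c n)
    refine h1.congr_deriv ?_
    push_cast; ring
  have h2 := HasDerivAt.fun_sum h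
  have : thomePartial c N = fun y : ℝ => ∑ n ∈ Finset.range (N+1), c n * ((y:ℂ)) ^ (-(n:ℤ)) := rfl
  rw [this, Ys1]
  exact h2

lemma hasDerivAt_Ys1 (c : ℕ → ℂ) (N : ℕ) {ρ : ℝ} (hρ : ρ ≠ 0) :
    HasDerivAt (fun x:ℝ => Ys1 c N (x:ℂ)) (Ys2 c N (ρ:ℂ)) ρ := by
  have hz : ((ρ:ℂ)) ≠ 0 := by exact_mod_cast hρ
  have h : ∀ n ∈ Finset.range (N+1), HasDerivAt (fun x:ℝ => c n * (-(n:ℂ)) * ((x:ℂ)) ^ (-(n:ℤ)-1))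
      (c n * ((n:ℂ)*((n:ℂ)+1)) * (ρ:ℂ) ^ (-(n:ℤ)-2)) ρ := by
    intro n _
    have h1 := ((hasDerivAt_zpow (-(n:ℤ)-1) ((ρ:ℂ)) (Or.inl hz)).comp_ofReal).const_mul
      (c n * (-(n:ℂ)))
    refine h1.congr_deriv ?_
    rw [show (-(n:ℤ)-1-1) = (-(n:ℤ)-2) by ring]
    push_cast; ring
  have h2 := HasDerivAt.fun_sum h
  have : (fun x:ℝ => Ys1 c N (x:ℂ))
      = fun y : ℝ => ∑ n ∈ Finset.range (N+1), c n * (-(n:ℂ)) * ((y:ℂ)) ^ (-(n:ℤ)-1) := rfl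
  rw [this, Ys2]
  exact h2

/-- The truncated Thomé series built from the three-term recursion (Appendix A)
solves the confluent Heun normal form up to a residual `O(ρ^{−(N+2)})` as
`ρ → ∞`. Here `L = (ℓ−s)(ℓ+s+1)` and `S = (s+1)(2s+1)`. -/
theorem thome_truncation_residual
    (s ℓ : ℤ) (hsl : |s| ≤ ℓ) (σ : ℂ) (hσ : σ ≠ 0) (c : ℕ → ℂ)
    (hc0 : c 0 = 1)
    (hc1 : c 1 = ((ℓ:ℂ)-(s:ℂ))*((ℓ:ℂ)+(s:ℂ)+1) / (2*σ))
    (hrec : ∀ n : ℕ,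
      2*σ*((n:ℂ)+2) * c (n+2) =
        (((ℓ:ℂ)-(s:ℂ))*((ℓ:ℂ)+(s:ℂ)+1) - ((n:ℂ)+1)*((n:ℂ)+2*(s:ℂ)+2)) * c (n+1) +
          ((n:ℂ)*((n:ℂ)+3*(s:ℂ)+2) + ((s:ℂ)+1)*(2*(s:ℂ)+1)) * c n)
    (N : ℕ) :
    (fun ρ : ℝ =>
        deriv (deriv (thomePartial c N)) ρ +
          Pcoef s σ (ρ:ℂ) * deriv (thomePartial c N) ρ +
          Qcoef s ℓ (ρ:ℂ) * thomePartial c N ρ)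
      =O[Filter.atTop] fun ρ : ℝ => ρ ^ (-(N:ℤ) - 2) := by
  
  set K1 : ℂ := -2*σ*((N:ℂ)+1)*c (N+1) with hK1
  set K2 : ℂ := -(((N:ℂ))*((N:ℂ)+3*(s:ℂ)+2) + ((s:ℂ)+1)*(2*(s:ℂ)+1)) * c N with hK2
  rw [Asymptotics.isBigO_iff]
  refine ⟨2*(‖K1‖+‖K2‖), ?_⟩
  filter_upwards [Filter.eventually_ge_atTop (2:ℝ)] with ρ hρ2
  have hρ0 : (0:ℝ) < ρ := by linarith
  have hρne : ρ ≠ 0 := ne_of_gt hρ0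
  have hz : ((ρ:ℂ)) ≠ 0 := by exact_mod_cast hρne
  have hz1 : ((ρ:ℂ)) - 1 ≠ 0 := by
    have h : ((ρ:ℂ)) - 1 = ((ρ - 1 : ℝ) : ℂ) := by push_cast; ring
    rw [h]
    exact_mod_cast (by linarith : ρ - 1 ≠ 0)
  have hd1 : deriv (thomePartial c N) ρ = Ys1 c N (ρ:ℂ) :=
    (hasDerivAt_thomePartial c N hρne).deriv
  have hev : deriv (thomePartial c N) =ᶠ[nhds ρ] fun x : ℝ => Ys1 c N (x:ℂ) := by
    filter_upwards [eventually_ne_nhds hρne] with x hx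
    exact (hasDerivAt_thomePartial c N hx).deriv
  have hd2 : deriv (deriv (thomePartial c N)) ρ = Ys2 c N (ρ:ℂ) := by
    rw [hev.deriv_eq]
    exact (hasDerivAt_Ys1 c N hρne).deriv
  have hth : thomePartial c N ρ = Ys c N (ρ:ℂ) := rfl
  have hkey := key_identity s ℓ σ hσ c hc0 hc1 hrec N (ρ:ℂ) hz
  have hP : Pcoef s σ (ρ:ℂ) * ((ρ:ℂ)*((ρ:ℂ)-1))
      = -2*σ*(ρ:ℂ)*((ρ:ℂ)-1) - (3*(s:ℂ)+1)*((ρ:ℂ)-1) + (1+(s:ℂ)-2*σ)*(ρ:ℂ) := by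
    rw [Pcoef]; field_simp
  have hQ : Qcoef s ℓ (ρ:ℂ) * ((ρ:ℂ)^2*((ρ:ℂ)-1))
      = ((s:ℂ)+1)*(2*(s:ℂ)+1)*((ρ:ℂ)-1) - (((s:ℂ)+1)^2 + (ℓ:ℂ)*((ℓ:ℂ)+1))*(ρ:ℂ) := by
    rw [Qcoef]; field_simp
  have hres : deriv (deriv (thomePartial c N)) ρ + Pcoef s σ (ρ:ℂ) * deriv (thomePartial c N) ρ
      + Qcoef s ℓ (ρ:ℂ) * thomePartial c N ρ
      = ((ρ:ℂ))^(-(N:ℤ)) * (K1 * (ρ:ℂ)^2 + K2 * (ρ:ℂ)) / ((ρ:ℂ)^3*((ρ:ℂ)-1)) := by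
    rw [hd1, hd2, hth, eq_div_iff (mul_ne_zero (pow_ne_zero 3 hz) hz1)]
    linear_combination hkey + ((ρ:ℂ)^2 * Ys1 c N (ρ:ℂ)) * hP + ((ρ:ℂ) * Ys c N (ρ:ℂ)) * hQ
  rw [hres]
  -- norms
  have hnormw : ‖((ρ:ℂ))‖ = ρ := by rw [Complex.norm_real, Real.norm_eq_abs, abs_of_pos hρ0]
  have hnormw1 : ‖((ρ:ℂ)) - 1‖ = ρ - 1 := by
    have h : ((ρ:ℂ)) - 1 = ((ρ - 1 : ℝ) : ℂ) := by push_cast; ring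
    rw [h, Complex.norm_real, Real.norm_eq_abs, abs_of_pos (by linarith)]
  have ht : (0:ℝ) < ρ ^ (-(N:ℤ)) := zpow_pos hρ0 _
  have hnormt : ‖((ρ:ℂ))^(-(N:ℤ))‖ = ρ ^ (-(N:ℤ)) := by rw [norm_zpow, hnormw]
  have hu0 : (0:ℝ) < ρ ^ (-(N:ℤ)-2) := zpow_pos hρ0 _
  have htu : ρ ^ (-(N:ℤ)) = ρ ^ (-(N:ℤ)-2) * ρ^2 := by
    conv_lhs => rw [show (-(N:ℤ)) = (-(N:ℤ)-2)+2 by ring]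
    rw [zpow_add₀ hρne]; norm_cast
  have hnum : ‖K1 * (ρ:ℂ)^2 + K2 * (ρ:ℂ)‖ ≤ ‖K1‖ * ρ^2 + ‖K2‖ * ρ := by
    calc ‖K1 * (ρ:ℂ)^2 + K2 * (ρ:ℂ)‖ ≤ ‖K1 * (ρ:ℂ)^2‖ + ‖K2 * (ρ:ℂ)‖ := norm_add_le _ _
    _ = ‖K1‖ * ρ^2 + ‖K2‖ * ρ := by simp only [norm_mul, norm_pow, hnormw]
  have hdenpos : (0:ℝ) < ρ^3 * (ρ - 1) :=
    mul_pos (pow_pos hρ0 3) (by linarith)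
  have hK1n : (0:ℝ) ≤ ‖K1‖ := norm_nonneg _
  have hK2n : (0:ℝ) ≤ ‖K2‖ := norm_nonneg _
  rw [show ‖ρ ^ (-(N:ℤ) - 2)‖ = ρ ^ (-(N:ℤ)-2) from by
        rw [Real.norm_eq_abs, abs_of_pos hu0],
      norm_div, norm_mul, hnormt, norm_mul, hnormw1, norm_pow, hnormw,
      div_le_iff₀ hdenpos, htu]
  calc ρ ^ (-(N:ℤ)-2) * ρ^2 * ‖K1 * (ρ:ℂ)^2 + K2 * (ρ:ℂ)‖
      ≤ ρ ^ (-(N:ℤ)-2) * ρ^2 * (‖K1‖ * ρ^2 + ‖K2‖ * ρ) :=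
        mul_le_mul_of_nonneg_left hnum (by positivity)
    _ ≤ 2 * (‖K1‖ + ‖K2‖) * ρ ^ (-(N:ℤ)-2) * (ρ^3 * (ρ-1)) := by
        nlinarith [mul_nonneg (mul_nonneg hu0.le hK1n) (show (0:ℝ) ≤ ρ^3*(ρ-2) by nlinarith),
          mul_nonneg (mul_nonneg hu0.le hK2n) (show (0:ℝ) ≤ 2*ρ^4-3*ρ^3 by nlinarith)]
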